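/- For every sequence a = (a_1,...,a_l) of positive integers and all standard basis vectors v^a_η, v^a_γ of V(a), one has (F v^a_η, v^a_γ)_a = (q^{a_1+...+a_l-1}/[β^η_1+...+β^η_l]_0)·(v^a_η, E v^a_γ)_a. -/

import Mathlib

open scoped Classical

set_option maxHeartbeats 1000000
set_option synthInstance.maxHeartbeats 200000

noncomputable section

abbrev K : Type := RatFunc ℂ

noncomputable def q : K := RatFunc.X

/-- The quantum integer `[k] = (q^k - q^{-k})/(q - q^{-1})`. -/
noncomputable def qnum (k : ℕ) : K := (q ^ k - q⁻¹ ^ k) / (q - q⁻¹)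

/-- The quantum factorial `[k]! = [k][k-1]⋯[1]`. -/
noncomputable def qfact : ℕ → K
  | 0 => 1
  | k + 1 => qnum (k + 1) * qfact k

/-- The underlying vector space of `V(a_1) ⊗ ⋯ ⊗ V(a_l)`, with standard basis indexed by
sequences `η ∈ {0,1}^l`. -/
abbrev V (n : ℕ) : Type := (Fin n → Fin 2) → K

/-- The standard basis vector `v^a_η`. -/
noncomputable def eb {n : ℕ} (η : Fin n → Fin 2) : V n := fun γ => if γ = η then 1 else 0

/-- The number of `1`s in `γ` strictly before position `i` (the Koszul sign exponent). -/
def onesBefore {n : ℕ} (γ : Fin n → Fin 2) (i : Fin n) : ℕ :=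
  (Finset.univ.filter (fun k => k < i ∧ γ k = 1)).card

/-- The action of `E` on `V(a_1) ⊗ ⋯ ⊗ V(a_l)` (via the iterated comultiplication
`Δ(E) = E ⊗ K⁻¹ + 1 ⊗ E`, with the Koszul sign rule). -/
noncomputable def Eop (a : ℕ → ℕ) (n : ℕ) : Module.End K (V n) where
  toFun f := fun γ => ∑ i : Fin n,
    if γ i = 0 then
      ((-1 : K) ^ onesBefore γ i) * qnum (a i)
        * q ^ (-((∑ j ∈ Finset.univ.filter (fun j => i < j), a j : ℕ) : ℤ))
        * f (Function.update γ i 1)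
    else 0
  map_add' f g := by
    funext γ
    simp only [Pi.add_apply, ← Finset.sum_add_distrib]
    refine Finset.sum_congr rfl fun i _ => ?_
    split_ifs <;> ring
  map_smul' c f := by
    funext γ
    simp only [Pi.smul_apply, smul_eq_mul, RingHom.id_apply, Finset.mul_sum]
    refine Finset.sum_congr rfl fun i _ => ?_
    split_ifs <;> ring

/-- The action of `F` on `V(a_1) ⊗ ⋯ ⊗ V(a_l)` (via the iterated comultiplication
`Δ(F) = F ⊗ 1 + K ⊗ F`, with the Koszul sign rule). -/
noncomputable def Fop (a : ℕ → ℕ) (n : ℕ) : Module.End K (V n) where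
  toFun f := fun γ => ∑ i : Fin n,
    if γ i = 1 then
      ((-1 : K) ^ onesBefore γ i)
        * q ^ (∑ j ∈ Finset.univ.filter (fun j => j < i), a j)
        * f (Function.update γ i 0)
    else 0
  map_add' f g := by
    funext γ
    simp only [Pi.add_apply, ← Finset.sum_add_distrib]
    refine Finset.sum_congr rfl fun i _ => ?_
    split_ifs <;> ring
  map_smul' c f := by
    funext γ
    simp only [Pi.smul_apply, smul_eq_mul, RingHom.id_apply, Finset.mul_sum]
    refine Finset.sum_congr rfl fun i _ => ?_
    split_ifs <;> ring

/-- The number of entries of `η` equal to `1` (the super degree of `v_η`). -/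
def ones {m : ℕ} (η : Fin m → Fin 2) : ℕ := (Finset.univ.filter (fun i => η i = 1)).card

/-- The number of entries of `η` equal to `0`. -/
def zeros {m : ℕ} (η : Fin m → Fin 2) : ℕ := (Finset.univ.filter (fun i => η i = 0)).card

/-- The parity twist `x ↦ (-1)^{|x|}·x` (on homogeneous components). -/
noncomputable def twist {m : ℕ} (x : V m) : V m := fun η => (-1 : K) ^ ones η * x η

/-- The bar involution of `V(a_1) ⊗ ⋯ ⊗ V(a_m)`, defined inductively from
`bar v^a_i = v^a_i` on each factor by `bar (w ⊗ w') = Θ'(bar w ⊗ bar w')` with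
`Θ' = 1 + (q⁻¹ - q) E ⊗ F` (with the Koszul sign rule) and `bar q = q⁻¹`. -/
noncomputable def barV (a : ℕ → ℕ) : (m : ℕ) → V m → V m
  | 0, f => f
  | m + 1, f => fun γ =>
    if γ (Fin.last m) = 0 then
      barV a m (fun δ => f (Fin.snoc δ 0)) (fun i => γ i.castSucc)
    else
      barV a m (fun δ => f (Fin.snoc δ 1)) (fun i => γ i.castSucc)
        + (q⁻¹ - q) *
          Eop a m (twist (barV a m (fun δ => f (Fin.snoc δ 0)))) (fun i => γ i.castSucc)

def s (n : ℕ) (i : Fin (n - 1)) : Equiv.Perm (Fin n) :=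
  Equiv.swap ⟨(i : ℕ), by have := i.isLt; omega⟩ ⟨(i : ℕ) + 1, by have := i.isLt; omega⟩

def wordProd (n : ℕ) (l : List (Fin (n - 1))) : Equiv.Perm (Fin n) :=
  (l.map (s n)).prod

def len (n : ℕ) (w : Equiv.Perm (Fin n)) : ℕ :=
  sInf {k | ∃ l : List (Fin (n - 1)), l.length = k ∧ wordProd n l = w}

def bruhatLE (n : ℕ) (u w : Equiv.Perm (Fin n)) : Prop :=
  ∃ l : List (Fin (n - 1)), l.length = len n w ∧ wordProd n l = w ∧
    ∃ t : List (Fin (n - 1)), t.Sublist l ∧ wordProd n t = u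

def bruhatLT (n : ℕ) (u w : Equiv.Perm (Fin n)) : Prop :=
  bruhatLE n u w ∧ u ≠ w

/-- The parabolic subgroup of `S_n` generated by the simple transpositions indexed by `P`. -/
def parab (n : ℕ) (P : Finset (Fin (n - 1))) : Subgroup (Equiv.Perm (Fin n)) :=
  Subgroup.closure {σ | ∃ i ∈ P, σ = s n i}

/-- `w` is a shortest coset representative for `(S_k × S_{l-k}) \ S_l` (the parabolic
subgroup generated by all simple reflections except `s_k`). -/
def shortRep (l k : ℕ) (w : Equiv.Perm (Fin l)) : Prop :=
  ∀ x ∈ parab l (Finset.univ.filter (fun i : Fin (l - 1) => (i : ℕ) + 1 ≠ k)),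
    len l w ≤ len l (x * w)

/-- The minimal `{0,1}`-sequence `η_min = (0,…,0,1,…,1)` with `k` zeros. -/
def etaMin (l k : ℕ) : Fin l → Fin 2 := fun i => if (i : ℕ) < k then 0 else 1

/-- The partial order on the standard basis vectors of a weight space: within the weight
with `k` zeros, `η < γ` iff `η = η_min·u`, `γ = η_min·w` for shortest coset
representatives `u ≺ w` in the Bruhat order. -/
def seqLT (l k : ℕ) (η γ : Fin l → Fin 2) : Prop :=
  ∃ u w : Equiv.Perm (Fin l), shortRep l k u ∧ shortRep l k w ∧ bruhatLT l u w ∧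
    η = (fun i => etaMin l k (u i)) ∧ γ = (fun i => etaMin l k (w i))

/-- The bar involution of `V(a)`: the semilinear extension (with respect to the field
homomorphism `barK`, which implements `q ↦ q⁻¹`) of the map `barV` computing the bar
involution on the standard basis vectors. -/
noncomputable def barSemi (barK : K →+* K) (a : ℕ → ℕ) (l : ℕ) (f : V l) : V l :=
  barV a l (fun η => barK (f η))

/-- `v` is the canonical basis element `v^{◊a}_η` of `V(a)`: it is bar-invariant and
`v - v^a_η` is a `q·ℤ[q]`-linear combination of standard basis vectors strictly smaller
than `v^a_η`. -/
def IsCanon (barK : K →+* K) (a : ℕ → ℕ) (l : ℕ) (η : Fin l → Fin 2) (v : V l) : Prop :=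
  barSemi barK a l v = v ∧
  ∃ R : (Fin l → Fin 2) → Polynomial ℤ,
    (∀ γ, ¬ seqLT l (zeros η) γ η → R γ = 0) ∧
    v = eb η + ∑ γ : Fin l → Fin 2, (q * Polynomial.aeval q (R γ)) • eb γ

/-- `β^η_j = a_j - η_j`. -/
def betaE (a : ℕ → ℕ) {m : ℕ} (η : Fin m → Fin 2) (i : Fin m) : ℕ := a i - (η i : ℕ)

/-- The diagonal coefficient
`q^{Σ_{i≠j} β^η_i β^η_j}·[β^η_1+⋯+β^η_m]!/([β^η_1]!⋯[β^η_m]!)` of the bilinear form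
(the sum in the exponent is over the unordered pairs `i ≠ j`). -/
noncomputable def formCoeff (a : ℕ → ℕ) (m : ℕ) (η : Fin m → Fin 2) : K :=
  q ^ (∑ p ∈ (Finset.univ ×ˢ Finset.univ).filter (fun p : Fin m × Fin m => p.1 < p.2),
        betaE a η p.1 * betaE a η p.2)
    * qfact (∑ i, betaE a η i) / ∏ i, qfact (betaE a η i)

/-- The symmetric bilinear form `(·,·)_a` on `V(a)`, for which the standard basis is
orthogonal with `(v^a_η, v^a_η)_a = formCoeff a m η`. -/
noncomputable def Bform (a : ℕ → ℕ) (m : ℕ) (f g : V m) : K :=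
  ∑ η : Fin m → Fin 2, formCoeff a m η * f η * g η

/-- The rescaled quantum integer `[k]₀ = q^{k-1}·[k]`. -/
noncomputable def qnum0 (k : ℕ) : K := q ^ ((k : ℤ) - 1) * qnum k

/-!
STATEMENT 15: For every sequence `a = (a_1,…,a_l)` of positive integers and all standard
basis vectors `v^a_η, v^a_γ` of `V(a)`, one has
`(F v^a_η, v^a_γ)_a = (q^{a_1+⋯+a_l-1}/[β^η_1+⋯+β^η_l]₀)·(v^a_η, E v^a_γ)_a`.
-/

section Aux
open Finset

lemma q_ne_zero : q ≠ 0 := RatFunc.X_ne_zero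

lemma qpow_ne_one {n : ℕ} (hn : n ≠ 0) : q ^ n ≠ 1 := by
  intro h
  have : (algebraMap (Polynomial ℂ) (RatFunc ℂ)) (Polynomial.X ^ n) =
      (algebraMap (Polynomial ℂ) (RatFunc ℂ)) 1 := by
    simpa [q, map_pow, RatFunc.algebraMap_X] using h
  have h2 := RatFunc.algebraMap_injective (K := ℂ) this
  have := congrArg Polynomial.natDegree h2
  simp [Polynomial.natDegree_X_pow] at this
  exact hn this

lemma qsub_ne_zero : q - q⁻¹ ≠ 0 := by
  intro h
  have hq := q_ne_zero
  have h' : q = q⁻¹ := sub_eq_zero.mp h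
  have h2 : q * q⁻¹ = 1 := mul_inv_cancel₀ hq
  rw [← h'] at h2
  have : q ^ 2 = 1 := by rw [pow_two]; exact h2
  exact qpow_ne_one (by norm_num) this

lemma qnum_ne_zero {k : ℕ} (hk : k ≠ 0) : qnum k ≠ 0 := by
  apply div_ne_zero _ qsub_ne_zero
  intro h
  have hq := q_ne_zero
  have h1 : q ^ k = q⁻¹ ^ k := sub_eq_zero.mp h
  have : q ^ (2 * k) = 1 := by
    rw [two_mul, pow_add]
    nth_rewrite 1 [h1]
    rw [← mul_pow, inv_mul_cancel₀ hq, one_pow]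
  exact qpow_ne_one (by omega) this

lemma qfact_ne_zero (k : ℕ) : qfact k ≠ 0 := by
  induction k with
  | zero => simp [qfact]
  | succ n ih => exact mul_ne_zero (qnum_ne_zero (Nat.succ_ne_zero n)) ih

lemma qfact_succ' {k : ℕ} (hk : 1 ≤ k) : qfact k = qnum k * qfact (k - 1) := by
  cases k with
  | zero => omega
  | succ n => simp [qfact]

lemma sq_sum_pairs (l : ℕ) (f : Fin l → ℤ) :
    (∑ j, f j) ^ 2 = ∑ j, (f j) ^ 2 +
      2 * ∑ p ∈ (univ ×ˢ univ).filter (fun p : Fin l × Fin l => p.1 < p.2), f p.1 * f p.2 := by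
  have h0 : (∑ j, f j) ^ 2 = ∑ p ∈ univ ×ˢ (univ : Finset (Fin l)), f p.1 * f p.2 := by
    rw [sq, Finset.sum_mul_sum]
    rw [Finset.sum_product]
  rw [h0, ← Finset.sum_filter_add_sum_filter_not (univ ×ˢ univ)
    (fun p : Fin l × Fin l => p.1 < p.2) (fun p => f p.1 * f p.2),
    ← Finset.sum_filter_add_sum_filter_not (((univ : Finset (Fin l)) ×ˢ univ).filter
      (fun p => ¬ p.1 < p.2)) (fun p : Fin l × Fin l => p.2 < p.1) (fun p => f p.1 * f p.2)]
  have hswap : ∑ p ∈ (((univ : Finset (Fin l)) ×ˢ univ).filter (fun p => ¬ p.1 < p.2)).filter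
      (fun p : Fin l × Fin l => p.2 < p.1), f p.1 * f p.2
      = ∑ p ∈ ((univ : Finset (Fin l)) ×ˢ univ).filter (fun p : Fin l × Fin l => p.1 < p.2),
        f p.1 * f p.2 := by
    apply Finset.sum_nbij' (i := Prod.swap) (j := Prod.swap)
    · intro p hp; simp at hp ⊢; omega
    · intro p hp; simp at hp ⊢; omega
    · intro p _; simp
    · intro p _; simp
    · intro p _; exact mul_comm _ _
  have hdiag : ∑ p ∈ (((univ : Finset (Fin l)) ×ˢ univ).filter (fun p => ¬ p.1 < p.2)).filter
      (fun p : Fin l × Fin l => ¬ p.2 < p.1), f p.1 * f p.2 = ∑ j, (f j) ^ 2 := by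
    apply Finset.sum_nbij' (i := fun p => p.1) (j := fun x => (x, x))
    · intro p hp; simp
    · intro x _; simp
    · intro p hp; simp at hp ⊢; have : p.1 = p.2 := le_antisymm hp.2 hp.1
      exact Prod.ext rfl this
    · intro x _; rfl
    · intro p hp; simp at hp; have : p.1 = p.2 := le_antisymm hp.2 hp.1
      rw [sq, ← this]
  rw [hswap, hdiag]; ring

lemma comp_update {α β γ : Type*} [DecidableEq α] (g : β → γ) (f : α → β) (i : α) (v : β) :
    (fun j => g (Function.update f i v j)) = Function.update (fun j => g (f j)) i (g v) := by
  funext j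
  by_cases h : j = i
  · subst h; simp
  · simp [Function.update_of_ne h]

lemma Bform_eb_right (a : ℕ → ℕ) (m : ℕ) (f : V m) (γ : Fin m → Fin 2) :
    Bform a m f (eb γ) = formCoeff a m γ * f γ := by
  rw [Bform, Finset.sum_eq_single γ]
  · simp [eb]
  · intro δ _ hδ; simp [eb, hδ]
  · simp

lemma Bform_eb_left (a : ℕ → ℕ) (m : ℕ) (g : V m) (η : Fin m → Fin 2) :
    Bform a m (eb η) g = formCoeff a m η * g η := by
  rw [Bform, Finset.sum_eq_single η]
  · simp [eb]
  · intro δ _ hδ; simp [eb, hδ]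
  · simp

lemma Fop_apply (a : ℕ → ℕ) (n : ℕ) (f : V n) (γ : Fin n → Fin 2) :
    Fop a n f γ = ∑ i : Fin n, if γ i = 1 then
      ((-1 : K) ^ onesBefore γ i)
        * q ^ (∑ j ∈ Finset.univ.filter (fun j => j < i), a j)
        * f (Function.update γ i 0) else 0 := rfl

lemma Eop_apply (a : ℕ → ℕ) (n : ℕ) (f : V n) (γ : Fin n → Fin 2) :
    Eop a n f γ = ∑ i : Fin n, if γ i = 0 then
      ((-1 : K) ^ onesBefore γ i) * qnum (a i)
        * q ^ (-((∑ j ∈ Finset.univ.filter (fun j => i < j), a j : ℕ) : ℤ))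
        * f (Function.update γ i 1) else 0 := rfl

lemma onesBefore_update {n : ℕ} (η : Fin n → Fin 2) (i : Fin n) (v : Fin 2) :
    onesBefore (Function.update η i v) i = onesBefore η i := by
  unfold onesBefore
  congr 1
  apply Finset.filter_congr
  intro k _
  by_cases hk : k < i
  · rw [Function.update_of_ne (ne_of_lt hk)]
  · simp [hk]

lemma key (ai m Sg Alt Agt : ℕ) (P Q R Sgn : K) (hai : ai ≠ 0)
    (hQ : Q ≠ 0) (hR : R ≠ 0) :
    q ^ Sg * P / (Q * R) * (Sgn * q ^ Alt)
      = q ^ (((Alt : ℤ) + (ai : ℤ) + (Agt : ℤ)) - 1) / (q ^ (((ai + m : ℕ) : ℤ) - 1) * qnum (ai + m))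
        * (q ^ (Sg + m) * (qnum (ai + m) * P) / (Q * (qnum ai * R))
           * (Sgn * qnum ai * q ^ (-(Agt : ℤ)))) := by
  have hq := q_ne_zero
  have h1 : qnum (ai + m) ≠ 0 := qnum_ne_zero (by omega)
  have h2 : qnum ai ≠ 0 := qnum_ne_zero hai
  rw [zpow_sub₀ hq, zpow_sub₀ hq, zpow_add₀ hq, zpow_add₀ hq, zpow_neg,
    zpow_natCast, zpow_natCast, zpow_natCast, zpow_natCast, zpow_one, pow_add, pow_add]
  field_simp

end Aux
theorem statement15 (l : ℕ) (a : ℕ → ℕ) (ha : ∀ i, 0 < a i)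
    (η γ : Fin l → Fin 2) :
    Bform a l (Fop a l (eb η)) (eb γ)
      = (q ^ ((∑ i : Fin l, (a i : ℤ)) - 1) / qnum0 (∑ i, betaE a η i))
          * Bform a l (eb η) (Eop a l (eb γ)) := by
  rw [Bform_eb_right, Bform_eb_left]
  by_cases hex : ∃ i : Fin l, η i = 0 ∧ γ = Function.update η i 1
  · obtain ⟨i, h0, rfl⟩ := hex
    have hai1 : 1 ≤ a i := ha i
    have hβi : betaE a η i = a i := by simp [betaE, h0]
    have haiN : a i ≤ ∑ j, betaE a η j := by
      rw [← hβi]; exact Finset.single_le_sum (fun j _ => Nat.zero_le _) (Finset.mem_univ i)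
    have hN1 : 1 ≤ ∑ j, betaE a η j := by omega
    -- compute the F-side matrix entry
    have h2 : Function.update (Function.update η i 1) i 0 = η := by
      rw [Function.update_idem, ← h0, Function.update_eq_self]
    have hF : Fop a l (eb η) (Function.update η i 1)
        = (-1 : K) ^ onesBefore η i
            * q ^ (∑ j ∈ Finset.univ.filter (fun j => j < i), a j) := by
      rw [Fop_apply, Finset.sum_eq_single i]
      · rw [if_pos (Function.update_self i 1 η), h2, onesBefore_update]
        simp [eb]
      · intro j _ hj
        split_ifs with h1
        · have he : eb η (Function.update (Function.update η i 1) j 0) = 0 := by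
            simp only [eb]
            rw [if_neg]
            intro hupd
            have hc := congrFun hupd i
            rw [Function.update_of_ne (Ne.symm hj), Function.update_self] at hc
            rw [h0] at hc
            exact absurd hc (by decide)
          rw [he, mul_zero]
        · rfl
      · intro hi; exact absurd (Finset.mem_univ i) hi
    -- compute the E-side matrix entry
    have hE : Eop a l (eb (Function.update η i 1)) η
        = (-1 : K) ^ onesBefore η i * qnum (a i)
            * q ^ (-((∑ j ∈ Finset.univ.filter (fun j => i < j), a j : ℕ) : ℤ)) := by
      rw [Eop_apply, Finset.sum_eq_single i]
      · rw [if_pos h0]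
        simp [eb]
      · intro j _ hj
        split_ifs with h1
        · have he : eb (Function.update η i 1) (Function.update η j 1) = 0 := by
            simp only [eb]
            rw [if_neg]
            intro hupd
            have hc := congrFun hupd i
            rw [Function.update_of_ne (Ne.symm hj), Function.update_self] at hc
            rw [h0] at hc
            exact absurd hc (by decide)
          rw [he, mul_zero]
        · rfl
      · intro hi; exact absurd (Finset.mem_univ i) hi
    rw [hF, hE]
    have hβγ : ∀ j : Fin l, j ≠ i → betaE a (Function.update η i 1) j = betaE a η j := by
      intro j hj; simp [betaE, Function.update_of_ne hj]
    have hβγi : betaE a (Function.update η i 1) i = a ↑i - 1 := by simp [betaE]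
    have hdiff : ∀ j : Fin l, j ∈ Finset.univ \ {i} → j ≠ i := by
      intro j hj; simpa using (Finset.mem_sdiff.mp hj).2
    have hsumγ : ∑ j, betaE a (Function.update η i 1) j = (∑ j, betaE a η j) - 1 := by
      have e1 : ∑ j ∈ Finset.univ \ {i}, betaE a (Function.update η i 1) j
          = ∑ j ∈ Finset.univ \ {i}, betaE a η j :=
        Finset.sum_congr rfl (fun j hj => hβγ j (hdiff j hj))
      rw [Finset.sum_eq_sum_sdiff_singleton_add (Finset.mem_univ i)
            (fun j => betaE a (Function.update η i 1) j),
          Finset.sum_eq_sum_sdiff_singleton_add (Finset.mem_univ i) (fun j => betaE a η j),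
          e1, hβγi, hβi]
      omega
    have hQη : ∑ j, ((betaE a η j : ℤ)) ^ 2
        = (∑ j ∈ Finset.univ \ {i}, ((betaE a η j : ℤ)) ^ 2) + ((a ↑i : ℤ)) ^ 2 := by
      rw [Finset.sum_eq_sum_sdiff_singleton_add (Finset.mem_univ i)
        (fun j => ((betaE a η j : ℤ)) ^ 2), hβi]
    have hQγ : ∑ j, ((betaE a (Function.update η i 1) j : ℤ)) ^ 2
        = (∑ j ∈ Finset.univ \ {i}, ((betaE a η j : ℤ)) ^ 2) + ((a ↑i : ℤ) - 1) ^ 2 := by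
      rw [Finset.sum_eq_sum_sdiff_singleton_add (Finset.mem_univ i)
        (fun j => ((betaE a (Function.update η i 1) j : ℤ)) ^ 2)]
      congr 1
      · exact Finset.sum_congr rfl (fun j hj => by rw [hβγ j (hdiff j hj)])
      · rw [hβγi]
        have hc : ((a ↑i - 1 : ℕ) : ℤ) = (a ↑i : ℤ) - 1 := by omega
        rw [hc]
    have hcη : ((∑ p ∈ (Finset.univ ×ˢ Finset.univ).filter (fun p : Fin l × Fin l => p.1 < p.2),
          betaE a η p.1 * betaE a η p.2 : ℕ) : ℤ)
        = ∑ p ∈ (Finset.univ ×ˢ Finset.univ).filter (fun p : Fin l × Fin l => p.1 < p.2),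
          ((betaE a η p.1 : ℤ)) * ((betaE a η p.2 : ℤ)) := by push_cast; ring
    have hcγ : ((∑ p ∈ (Finset.univ ×ˢ Finset.univ).filter (fun p : Fin l × Fin l => p.1 < p.2),
          betaE a (Function.update η i 1) p.1 * betaE a (Function.update η i 1) p.2 : ℕ) : ℤ)
        = ∑ p ∈ (Finset.univ ×ˢ Finset.univ).filter (fun p : Fin l × Fin l => p.1 < p.2),
          ((betaE a (Function.update η i 1) p.1 : ℤ))
            * ((betaE a (Function.update η i 1) p.2 : ℤ)) := by push_cast; ring
    have k1 := sq_sum_pairs l (fun j => (betaE a η j : ℤ))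
    have k2 := sq_sum_pairs l (fun j => (betaE a (Function.update η i 1) j : ℤ))
    have hlη : ∑ j, ((betaE a η j : ℤ)) = ((∑ j, betaE a η j : ℕ) : ℤ) := by push_cast; ring
    have hlγ : ∑ j, ((betaE a (Function.update η i 1) j : ℤ))
        = ((∑ j, betaE a η j : ℕ) : ℤ) - 1 := by
      have h' : ∑ j, ((betaE a (Function.update η i 1) j : ℤ))
          = ((∑ j, betaE a (Function.update η i 1) j : ℕ) : ℤ) := by push_cast; ring
      rw [h', hsumγ]
      omega
    rw [hlη, hQη] at k1
    rw [hlγ, hQγ] at k2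
    have hZ : ((∑ p ∈ (Finset.univ ×ˢ Finset.univ).filter (fun p : Fin l × Fin l => p.1 < p.2),
          betaE a η p.1 * betaE a η p.2 : ℕ) : ℤ)
        = ((∑ p ∈ (Finset.univ ×ˢ Finset.univ).filter (fun p : Fin l × Fin l => p.1 < p.2),
          betaE a (Function.update η i 1) p.1 * betaE a (Function.update η i 1) p.2 : ℕ) : ℤ)
          + ((∑ j, betaE a η j : ℕ) : ℤ) - ((a ↑i : ℕ) : ℤ) := by
      rw [hcη, hcγ]
      ring_nf at k1 k2 ⊢
      linarith [k1, k2]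
    have hS : (∑ p ∈ (Finset.univ ×ˢ Finset.univ).filter (fun p : Fin l × Fin l => p.1 < p.2),
          betaE a η p.1 * betaE a η p.2)
        = (∑ p ∈ (Finset.univ ×ˢ Finset.univ).filter (fun p : Fin l × Fin l => p.1 < p.2),
          betaE a (Function.update η i 1) p.1 * betaE a (Function.update η i 1) p.2)
          + ((∑ j, betaE a η j) - a ↑i) := by omega
    have hprodγ : ∏ j, qfact (betaE a (Function.update η i 1) j)
        = (∏ j ∈ Finset.univ \ {i}, qfact (betaE a η j)) * qfact (a ↑i - 1) := by
      rw [Finset.prod_eq_prod_diff_singleton_mul (Finset.mem_univ i)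
        (fun j => qfact (betaE a (Function.update η i 1) j))]
      congr 1
      · exact Finset.prod_congr rfl (fun j hj => by rw [hβγ j (hdiff j hj)])
      · rw [hβγi]
    have hprodη : ∏ j, qfact (betaE a η j)
        = (∏ j ∈ Finset.univ \ {i}, qfact (betaE a η j))
            * (qnum (a ↑i) * qfact (a ↑i - 1)) := by
      rw [Finset.prod_eq_prod_diff_singleton_mul (Finset.mem_univ i)
        (fun j => qfact (betaE a η j)), hβi, qfact_succ' hai1]
    have hsplit : (Finset.univ.filter (fun j : Fin l => ¬ j < i))
        = insert i (Finset.univ.filter (fun j : Fin l => i < j)) := by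
      ext j
      simp only [Finset.mem_filter, Finset.mem_insert, Finset.mem_univ, true_and, not_lt]
      constructor
      · intro hj
        rcases lt_or_eq_of_le hj with h | h
        · exact Or.inr h
        · exact Or.inl h.symm
      · rintro (rfl | h)
        · exact le_refl _
        · exact h.le
    have hA : (∑ j ∈ Finset.univ.filter (fun j : Fin l => j < i), a ↑j) + a ↑i
        + (∑ j ∈ Finset.univ.filter (fun j : Fin l => i < j), a ↑j) = ∑ j : Fin l, a ↑j := by
      rw [← Finset.sum_filter_add_sum_filter_not Finset.univ (fun j : Fin l => j < i)
        (fun j => a ↑j), hsplit, Finset.sum_insert (by simp)]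
      ring
    have hAz : (∑ j : Fin l, ((a ↑j : ℕ) : ℤ))
        = ((∑ j ∈ Finset.univ.filter (fun j : Fin l => j < i), a ↑j : ℕ) : ℤ) + ((a ↑i : ℕ) : ℤ)
          + ((∑ j ∈ Finset.univ.filter (fun j : Fin l => i < j), a ↑j : ℕ) : ℤ) := by
      have h' : (∑ j : Fin l, ((a ↑j : ℕ) : ℤ)) = ((∑ j : Fin l, a ↑j : ℕ) : ℤ) := by
        push_cast; ring
      rw [h', ← hA]
      push_cast; ring
    obtain ⟨N, hNe⟩ : ∃ N, ∑ j, betaE a η j = a ↑i + N := ⟨(∑ j, betaE a η j) - a ↑i, by omega⟩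
    simp only [formCoeff, qnum0]
    rw [hsumγ, hS, hprodγ, hprodη, qfact_succ' hN1, hAz, hNe, Nat.add_sub_cancel_left]
    have hQne : (∏ j ∈ Finset.univ \ {i}, qfact (betaE a η j)) ≠ 0 :=
      Finset.prod_ne_zero_iff.mpr (fun j _ => qfact_ne_zero _)
    exact key (a ↑i) N _ _ _ _ _ _ _ (by omega) hQne (qfact_ne_zero _)
  · push_neg at hex
    have hF : Fop a l (eb η) γ = 0 := by
      rw [Fop_apply]
      apply Finset.sum_eq_zero
      intro j _
      split_ifs with h1
      · have he : eb η (Function.update γ j 0) = 0 := by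
          simp only [eb]
          rw [if_neg]
          intro hupd
          have hη0 : η j = 0 := by rw [← hupd]; simp
          apply hex j hη0
          funext k
          by_cases hk : k = j
          · subst hk; rw [Function.update_self, h1]
          · rw [Function.update_of_ne hk]
            have := congrFun hupd k
            rw [Function.update_of_ne hk] at this
            exact this
        rw [he, mul_zero]
      · rfl
    have hE : Eop a l (eb γ) η = 0 := by
      rw [Eop_apply]
      apply Finset.sum_eq_zero
      intro j _
      split_ifs with h1
      · have he : eb γ (Function.update η j 1) = 0 := by
          simp only [eb]
          rw [if_neg]
          intro hupd
          exact hex j h1 hupd.symm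
        rw [he, mul_zero]
      · rfl
    rw [hF, hE, mul_zero, mul_zero, mul_zero]
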